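/- Let n and k be integers with 0 < k < n, and let α and β be sequences in Z_n with |α| + |β| = n − 1 + k, L(α) < n and L(1 − β) < n. Then the union α ∪ β contains no subsequence of length n whose sum is zero; that is, α ∪ β is n-zero-free. -/

import Mathlib

/-- The least positive representative of `a : ZMod n`: the unique integer in `[1, n]`
congruent to `a` modulo `n`. -/
def lpr {n : ℕ} (a : ZMod n) : ℕ := if a = 0 then n else ZMod.val a

/-- `Lsum α` is the sum of the least positive representatives of the terms of `α`. -/
def Lsum {n : ℕ} (α : Multiset (ZMod n)) : ℕ := (α.map lpr).sum

/-- `γ` is `n`-zero-free: it has no subsequence of length `n` with sum zero. -/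
def NZeroFree {n : ℕ} (γ : Multiset (ZMod n)) : Prop :=
  ∀ σ ≤ γ, Multiset.card σ = n → σ.sum ≠ 0

variable {n : ℕ}

lemma lpr_pos [NeZero n] (a : ZMod n) : 1 ≤ lpr a := by
  unfold lpr
  split
  · exact Nat.one_le_iff_ne_zero.mpr (NeZero.ne n)
  · exact Nat.one_le_iff_ne_zero.mpr (ZMod.val_ne_zero a |>.mpr ‹_›)

lemma cast_lpr [NeZero n] (a : ZMod n) : ((lpr a : ℕ) : ZMod n) = a := by
  unfold lpr
  split
  · simp [*]
  · simp [ZMod.natCast_val, ZMod.cast_id]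

lemma cast_Lsum [NeZero n] (σ : Multiset (ZMod n)) : ((Lsum σ : ℕ) : ZMod n) = σ.sum := by
  unfold Lsum
  rw [Nat.cast_multiset_sum, Multiset.map_map]
  rw [show (Nat.cast ∘ lpr : ZMod n → ZMod n) = id from funext (fun a => cast_lpr a),
    Multiset.map_id]

lemma card_le_Lsum [NeZero n] (σ : Multiset (ZMod n)) : Multiset.card σ ≤ Lsum σ := by
  unfold Lsum
  have h := Multiset.card_nsmul_le_sum (s := σ.map lpr) (a := 1) (by
    intro x hx
    obtain ⟨a, _, rfl⟩ := Multiset.mem_map.mp hx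
    exact lpr_pos a)
  simpa using h

lemma Lsum_mono {σ τ : Multiset (ZMod n)} (h : σ ≤ τ) : Lsum σ ≤ Lsum τ := by
  obtain ⟨u, rfl⟩ := Multiset.le_iff_exists_add.mp h
  unfold Lsum
  simp

lemma exists_decomp {σ α β : Multiset (ZMod n)} (h : σ ≤ α + β) :
    ∃ σ₁ σ₂, σ₁ ≤ α ∧ σ₂ ≤ β ∧ σ = σ₁ + σ₂ := by
  refine ⟨σ ∩ α, σ - σ ∩ α, Multiset.inter_le_right, ?_, ?_⟩
  · rw [Multiset.le_iff_count]
    intro x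
    have h1 := Multiset.count_le_of_le x h
    rw [Multiset.count_add] at h1
    rw [Multiset.count_sub, Multiset.count_inter]
    omega
  · rw [add_tsub_cancel_of_le Multiset.inter_le_left]


/-- If `|α| + |β| = n − 1 + k` with `0 < k < n`, `L(α) < n` and `L(1 − β) < n`, then
`α ∪ β` is `n`-zero-free. -/
theorem separable_is_n_zero_free (n k : ℕ) (hk : 0 < k) (hkn : k < n)
    (α β : Multiset (ZMod n))
    (hlen : Multiset.card α + Multiset.card β = n - 1 + k)
    (hα : Lsum α < n) (hβ : Lsum (β.map (fun b => 1 - b)) < n) :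
    NZeroFree (α + β) := by
  haveI : NeZero n := ⟨by omega⟩
  intro σ hσ hcard hsum
  obtain ⟨σ₁, σ₂, h1, h2, rfl⟩ := exists_decomp hσ
  set A := Lsum σ₁ with hA
  set B := Lsum (σ₂.map (fun b => 1 - b)) with hB
  set c := Multiset.card σ₂ with hc
  have hAle : A ≤ Lsum α := Lsum_mono h1
  have hBle : B ≤ Lsum (β.map (fun b => 1 - b)) :=
    Lsum_mono (Multiset.map_le_map h2)
  have hcardA : Multiset.card σ₁ ≤ A := card_le_Lsum σ₁
  have hcardB : c ≤ B := by
    have := card_le_Lsum (σ₂.map (fun b => 1 - b))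
    simpa using this
  have hcard' : Multiset.card σ₁ + c = n := by
    rw [← Multiset.card_add]; exact hcard
  -- cast identity
  have hcast : ((A + c : ℕ) : ZMod n) = (B : ZMod n) := by
    rw [Nat.cast_add, cast_Lsum, hB, cast_Lsum]
    rw [Multiset.sum_add] at hsum
    have hsum2 : σ₂.sum = -σ₁.sum := by linear_combination hsum
    rw [Multiset.sum_map_sub]
    simp [hsum2, hc]
    ring
  have hmod : (A + c) ≡ B [MOD n] := (ZMod.natCast_eq_natCast_iff _ _ _).mp hcast
  have hlt1 : B < A + c := by omega
  have hdvd : n ∣ (A + c) - B := (Nat.modEq_iff_dvd' (le_of_lt hlt1)).mp hmod.symm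
  have hlt2 : (A + c) - B < n := by omega
  have := Nat.le_of_dvd (by omega) hdvd
  omega
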